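/- Let Z : ℕ → ℝ be a sequence such that for every z ∈ [0,1/4) the series ∑_{p≥0} Z(p)·z^p converges with sum (1 + 7z - 8z² + √((1-z)(1-4z)³)) / (2(1-z)). Define θ(k) = (1/8)·4^{1-k}·Z(k+1) for k ≥ 0. Then for every x ∈ [0,1), the series ∑_{k≥0} θ(k)·x^k converges with sum 1 - 3/((√((4-x)/(1-x)) + 1)² - 1). -/

import Mathlib

theorem stmt_10 (Z : ℕ → ℝ)
    (hgen : ∀ z ∈ Set.Ico (0 : ℝ) (1 / 4),
      HasSum (fun p : ℕ => Z p * z ^ p)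
        ((1 + 7 * z - 8 * z ^ 2 + Real.sqrt ((1 - z) * (1 - 4 * z) ^ 3)) / (2 * (1 - z)))) :
    ∀ x ∈ Set.Ico (0 : ℝ) 1,
      HasSum (fun k : ℕ => (1 / 8) * (4 : ℝ) ^ ((1 : ℤ) - (k : ℤ)) * Z (k + 1) * x ^ k)
        (1 - 3 / ((Real.sqrt ((4 - x) / (1 - x)) + 1) ^ 2 - 1)) := by
  have h4 : Real.sqrt 4 = 2 := by
    rw [show (4 : ℝ) = 2 ^ 2 by norm_num, Real.sqrt_sq (by norm_num)]
  have hZ0 : Z 0 = 1 := by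
    have h1 := hgen 0 (by constructor <;> norm_num)
    have h2 : HasSum (fun p : ℕ => Z p * (0 : ℝ) ^ p) (Z 0) := by
      have := hasSum_single (f := fun p : ℕ => Z p * (0 : ℝ) ^ p) 0
        (fun b hb => by simp [zero_pow hb])
      simpa using this
    have h3 := h2.unique h1
    rw [h3]; norm_num
  have key : ∀ x ∈ Set.Ioo (0 : ℝ) 1,
      HasSum (fun k : ℕ => (1 / 8) * (4 : ℝ) ^ ((1 : ℤ) - (k : ℤ)) * Z (k + 1) * x ^ k)
        (1 - 3 / ((Real.sqrt ((4 - x) / (1 - x)) + 1) ^ 2 - 1)) := by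
    rintro x ⟨hx0, hx1⟩
    have h1 := hgen (x / 4) ⟨by linarith, by linarith⟩
    have h2 := (hasSum_nat_add_iff' (f := fun p : ℕ => Z p * (x / 4) ^ p) 1).mpr h1
    simp only [Finset.range_one, Finset.sum_singleton, pow_zero, mul_one, hZ0] at h2
    have h3 := h2.mul_left (2 / x)
    have hfun : (fun k : ℕ => 2 / x * (Z (k + 1) * (x / 4) ^ (k + 1))) =
        fun k : ℕ => (1 / 8) * (4 : ℝ) ^ ((1 : ℤ) - (k : ℤ)) * Z (k + 1) * x ^ k := by
      funext k
      rw [zpow_sub₀ (by norm_num : (4 : ℝ) ≠ 0), zpow_one, zpow_natCast, div_pow]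
      have h4k : (4 : ℝ) ^ k ≠ 0 := by positivity
      field_simp
      ring
    rw [hfun] at h3
    have hx4 : (0 : ℝ) < 4 - x := by linarith
    have h1x : (0 : ℝ) < 1 - x := by linarith
    set q := Real.sqrt ((4 - x) * (1 - x)) with hq
    set r := Real.sqrt ((4 - x) / (1 - x)) with hr
    have hr0 : 0 < r := Real.sqrt_pos.mpr (by positivity)
    have hr2 : r ^ 2 = (4 - x) / (1 - x) := Real.sq_sqrt (by positivity)
    have hr2' : r ^ 2 * (1 - x) = 4 - x := by
      rw [hr2]; field_simp
    have hqr : q = r * (1 - x) := by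
      rw [hq, hr, show (4 - x) * (1 - x) = (4 - x) / (1 - x) * (1 - x) ^ 2 by
        field_simp, Real.sqrt_mul (by positivity), Real.sqrt_sq h1x.le]
    have hs : Real.sqrt ((1 - x / 4) * (1 - 4 * (x / 4)) ^ 3) = (1 - x) / 2 * q := by
      rw [hq, show (1 - x / 4) * (1 - 4 * (x / 4)) ^ 3
          = ((1 - x) / 2) ^ 2 * ((4 - x) * (1 - x)) by ring,
        Real.sqrt_mul (sq_nonneg _), Real.sqrt_sq (by linarith)]
    have hden : (r + 1) ^ 2 - 1 ≠ 0 := by nlinarith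
    have hval : 2 / x * ((1 + 7 * (x / 4) - 8 * (x / 4) ^ 2 +
          Real.sqrt ((1 - x / 4) * (1 - 4 * (x / 4)) ^ 3)) / (2 * (1 - x / 4)) - 1)
        = 1 - 3 / ((r + 1) ^ 2 - 1) := by
      rw [hs, hqr]
      have h14 : (1 : ℝ) - x / 4 ≠ 0 := by linarith
      have h4x : (4 : ℝ) - x ≠ 0 := by linarith
      field_simp
      ring_nf
      linear_combination (16 * r - 16 * x * r - 24 * x) * hr2'
    rw [hval] at h3
    exact h3
  -- value of the closed form at 0
  have hg0 : (1 : ℝ) - 3 / ((Real.sqrt ((4 - 0) / (1 - 0)) + 1) ^ 2 - 1) = 5 / 8 := by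
    norm_num [h4]
  -- c 0 = 5/8
  have hc0 : (1 / 8 : ℝ) * (4 : ℝ) ^ ((1 : ℤ) - ((0 : ℕ) : ℤ)) * Z 1 = 5 / 8 := by
    -- boundedness of coefficients at 1/2
    have hS := (key (1/2) (by constructor <;> norm_num)).summable
    have h0 := hS.tendsto_atTop_zero
    have hbdd := (h0.abs).bddAbove_range
    obtain ⟨C, hC⟩ := hbdd
    simp only [mem_upperBounds, Set.mem_range, forall_exists_index] at hC
    have hC' : ∀ k : ℕ, |(1 / 8) * (4 : ℝ) ^ ((1 : ℤ) - (k : ℤ)) * Z (k + 1) * (1/2 : ℝ) ^ k| ≤ C :=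
      fun k => hC _ k rfl
    have hC0 : 0 ≤ C := le_trans (abs_nonneg _) (hC' 0)
    set c : ℕ → ℝ := fun k => (1 / 8) * (4 : ℝ) ^ ((1 : ℤ) - (k : ℤ)) * Z (k + 1) with hcdef
    set g : ℝ → ℝ := fun y => 1 - 3 / ((Real.sqrt ((4 - y) / (1 - y)) + 1) ^ 2 - 1) with hgdef
    have tail : ∀ x : ℝ, x ∈ Set.Ioc (0 : ℝ) (1/4) → |g x - c 0| ≤ 4 * C * x := by
      rintro x ⟨hx0, hx4⟩
      have hk := key x ⟨hx0, by linarith⟩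
      have h2 := (hasSum_nat_add_iff' (f := fun k : ℕ => c k * x ^ k) 1).mpr hk
      simp only [Finset.range_one, Finset.sum_singleton, pow_zero, mul_one] at h2
      have h2x1 : 2 * x < 1 := by linarith
      have h2x0 : (0 : ℝ) ≤ 2 * x := by linarith
      have hgeo := (hasSum_geometric_of_lt_one h2x0 h2x1).mul_left (C * (2 * x))
      have hbnd : ∀ k : ℕ, |c (k + 1) * x ^ (k + 1)| ≤ C * (2 * x) * (2 * x) ^ k := by
        intro k
        have e1 : c (k + 1) * x ^ (k + 1)
            = (c (k + 1) * (1/2 : ℝ) ^ (k + 1)) * (2 * x) ^ (k + 1) := by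
          have hh : ((1 : ℝ)/2) ^ (k + 1) * 2 ^ (k + 1) = 1 := by
            rw [← mul_pow]; norm_num
          rw [mul_pow, show (c (k + 1) * (1/2 : ℝ) ^ (k + 1)) * ((2 : ℝ) ^ (k + 1) * x ^ (k + 1))
            = c (k + 1) * (((1/2 : ℝ) ^ (k + 1) * 2 ^ (k + 1)) * x ^ (k + 1)) from by ring,
            hh, one_mul]
        rw [e1, abs_mul, abs_of_nonneg (pow_nonneg h2x0 _)]
        calc |c (k + 1) * (1/2 : ℝ) ^ (k + 1)| * (2 * x) ^ (k + 1)
            ≤ C * (2 * x) ^ (k + 1) := by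
              apply mul_le_mul_of_nonneg_right (hC' (k + 1)) (pow_nonneg h2x0 _)
          _ = C * (2 * x) * (2 * x) ^ k := by ring
      have hsummb : Summable (fun k : ℕ => C * (2 * x) * (2 * x) ^ k) := hgeo.summable
      have hsumma : Summable (fun k : ℕ => |c (k + 1) * x ^ (k + 1)|) :=
        Summable.of_nonneg_of_le (fun k => abs_nonneg _) hbnd hsummb
      have e2 : g x - c 0 = ∑' k : ℕ, c (k + 1) * x ^ (k + 1) := h2.tsum_eq.symm
      have e3 : |∑' k : ℕ, c (k + 1) * x ^ (k + 1)| ≤ ∑' k : ℕ, |c (k + 1) * x ^ (k + 1)| := by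
        have := norm_tsum_le_tsum_norm (f := fun k : ℕ => c (k + 1) * x ^ (k + 1))
          (by simpa only [Real.norm_eq_abs] using hsumma)
        simpa only [Real.norm_eq_abs] using this
      have e4 : (∑' k : ℕ, |c (k + 1) * x ^ (k + 1)|) ≤ C * (2 * x) * (1 - 2 * x)⁻¹ := by
        rw [← hgeo.tsum_eq]
        exact Summable.tsum_le_tsum hbnd hsumma hsummb
      have e5 : C * (2 * x) * (1 - 2 * x)⁻¹ ≤ 4 * C * x := by
        have hinv : (1 - 2 * x)⁻¹ ≤ 2 := by
          rw [show (2 : ℝ) = (1/2 : ℝ)⁻¹ by norm_num]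
          exact inv_anti₀ (by norm_num) (by linarith)
        have : C * (2 * x) * (1 - 2 * x)⁻¹ ≤ C * (2 * x) * 2 :=
          mul_le_mul_of_nonneg_left hinv (by positivity)
        linarith
      rw [e2]
      linarith [le_trans e3 e4]
    -- sequences
    have hu : Filter.Tendsto (fun n : ℕ => ((n : ℝ) + 5)⁻¹) Filter.atTop (nhds 0) := by
      apply Filter.Tendsto.inv_tendsto_atTop
      exact Filter.tendsto_atTop_add_const_right _ 5 tendsto_natCast_atTop_atTop
    have hmem : ∀ n : ℕ, ((n : ℝ) + 5)⁻¹ ∈ Set.Ioc (0 : ℝ) (1/4) := by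
      intro n
      have hn5 : (0 : ℝ) < (n : ℝ) + 5 := by positivity
      constructor
      · positivity
      · rw [show (1/4 : ℝ) = (4 : ℝ)⁻¹ by norm_num]
        exact inv_anti₀ (by norm_num) (by push_cast; linarith [Nat.cast_nonneg (α := ℝ) n])
    have h1 : Filter.Tendsto (fun n : ℕ => g (((n : ℝ) + 5)⁻¹)) Filter.atTop (nhds (c 0)) := by
      rw [← tendsto_sub_nhds_zero_iff]
      apply squeeze_zero_norm (fun n => tail _ (hmem n))
      have := hu.const_mul (4 * C)
      simpa using this
    have h2 : Filter.Tendsto (fun n : ℕ => g (((n : ℝ) + 5)⁻¹)) Filter.atTop (nhds (5/8)) := by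
      have hc1 : ContinuousAt (fun y : ℝ => (4 - y) / (1 - y)) 0 :=
        ContinuousAt.div (by fun_prop) (by fun_prop) (by norm_num)
      have hc2 : ContinuousAt (fun y : ℝ => ((Real.sqrt ((4 - y) / (1 - y)) + 1) ^ 2 - 1)) 0 :=
        (((Real.continuous_sqrt.continuousAt.comp hc1).add continuousAt_const).pow 2).sub
          continuousAt_const
      have hne : ((Real.sqrt ((4 - (0:ℝ)) / (1 - 0)) + 1) ^ 2 - 1) ≠ 0 := by
        norm_num [h4]
      have hc3 : ContinuousAt g 0 :=
        ContinuousAt.sub continuousAt_const (ContinuousAt.div continuousAt_const hc2 hne)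
      have := hc3.tendsto.comp hu
      have hg0' : g 0 = 5 / 8 := by rw [hgdef]; exact hg0
      rw [hg0'] at this
      exact this
    exact tendsto_nhds_unique h1 h2
  intro x hx
  rcases eq_or_lt_of_le hx.1 with hx0 | hx0
  · rw [← hx0]
    have hsingle := hasSum_single (f := fun k : ℕ =>
        (1 / 8) * (4 : ℝ) ^ ((1 : ℤ) - (k : ℤ)) * Z (k + 1) * (0 : ℝ) ^ k) 0
        (fun b hb => by simp [zero_pow hb])
    simp only [pow_zero, mul_one] at hsingle
    rw [show (1 : ℝ) - 3 / ((Real.sqrt ((4 - 0) / (1 - 0)) + 1) ^ 2 - 1) = 5 / 8 from hg0,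
      ← hc0]
    exact hsingle
  · exact key x ⟨hx0, hx.2⟩
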